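/- Let (P,∗,∘) be a finite-dimensional pre-Poisson algebra over a field K, λ ∈ K nonzero, and r ∈ P⊗P with Z(r) = 0, S(r) = 0, r − τ(r) (L,R)-invariant, and I := r₊ − r₋ bijective (a factorizable structure). Let B := λ·r₋∘I⁻¹ and let ∗_B, ∘_B be the descendent operations x∗_By := B(x)∗y + x∗B(y) + λx∗y and x∘_By := B(x)∘y + x∘B(y) + λx∘y. Then the map φ := (1/λ)·I : P* → P is an isomorphism of pre-Poisson algebras from (P*, ∗_r, ∘_r) to (P, ∗_B, ∘_B): φ is bijective and φ(ξ∗_rη) = φ(ξ)∗_Bφ(η) and φ(ξ∘_rη) = φ(ξ)∘_Bφ(η) for all ξ,η ∈ P*. -/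
import Mathlib


open TensorProduct

section

variable {K : Type*} [Field K] {P : Type*} [AddCommGroup P] [Module K P]

/-- The map `r₊ : P* → P` induced by `r ∈ P ⊗ P`: if `r = Σᵢ aᵢ ⊗ bᵢ` then
`r₊(ξ) = Σᵢ ξ(aᵢ) • bᵢ`, so that `η(r₊ ξ) = r(ξ, η)`. -/
noncomputable def rPlus (r : P ⊗[K] P) (ξ : Module.Dual K P) : P :=
  TensorProduct.lift ((LinearMap.lsmul K P).comp ξ) r

/-- The map `r₋ : P* → P` induced by `r ∈ P ⊗ P`: if `r = Σᵢ aᵢ ⊗ bᵢ` then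
`r₋(η) = Σᵢ η(bᵢ) • aᵢ`, so that `ξ(r₋ η) = r(ξ, η)`. -/
noncomputable def rMinus (r : P ⊗[K] P) (η : Module.Dual K P) : P :=
  TensorProduct.lift (((LinearMap.lsmul K P).comp η).flip) r

/-- `(L,R)`-invariance of an element `a ∈ P ⊗ P`. -/
def LRinv (mul cir : P →ₗ[K] P →ₗ[K] P) (a : P ⊗[K] P) : Prop :=
  (∀ x : P,
    (TensorProduct.map (mul x) (LinearMap.id : P →ₗ[K] P)
      - TensorProduct.map (LinearMap.id : P →ₗ[K] P) (mul x + mul.flip x)) a = 0) ∧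
  (∀ x : P,
    (TensorProduct.map (cir x) (LinearMap.id : P →ₗ[K] P)
      + TensorProduct.map (LinearMap.id : P →ₗ[K] P) (cir x - cir.flip x)) a = 0)

/-- The Zinbiel Yang–Baxter expression `Z(r)` for `r = Σᵢ aᵢ ⊗ bᵢ`. -/
noncomputable def Zsum (mul : P →ₗ[K] P →ₗ[K] P) {n : ℕ} (a b : Fin n → P) :
    P ⊗[K] (P ⊗[K] P) :=
  - ∑ i, ∑ j, mul (a i) (a j) ⊗ₜ[K] (b j ⊗ₜ[K] b i)
  - ∑ i, ∑ j, b j ⊗ₜ[K] (mul (a i) (a j) ⊗ₜ[K] b i)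
  + ∑ i, ∑ j, (mul (a i) (b j) + mul (b j) (a i)) ⊗ₜ[K] (a j ⊗ₜ[K] b i)
  + ∑ i, ∑ j, a i ⊗ₜ[K] ((mul (b i) (a j) + mul (a j) (b i)) ⊗ₜ[K] b j)
  - ∑ i, ∑ j, a i ⊗ₜ[K] (a j ⊗ₜ[K] (mul (b i) (b j) + mul (b j) (b i)))

/-- The S-equation expression `S(r)` for `r = Σᵢ aᵢ ⊗ bᵢ`. -/
noncomputable def Ssum (cir : P →ₗ[K] P →ₗ[K] P) {n : ℕ} (a b : Fin n → P) :
    P ⊗[K] (P ⊗[K] P) :=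
  ∑ i, ∑ j, cir (a i) (a j) ⊗ₜ[K] (b j ⊗ₜ[K] b i)
  - ∑ i, ∑ j, b j ⊗ₜ[K] (cir (a i) (a j) ⊗ₜ[K] b i)
  + ∑ i, ∑ j, b j ⊗ₜ[K] ((cir (a i) (a j) - cir (a j) (a i)) ⊗ₜ[K] b i)
  - ∑ i, ∑ j, (cir (a i) (b j) - cir (b j) (a i)) ⊗ₜ[K] (a j ⊗ₜ[K] b i)
  - ∑ i, ∑ j, a i ⊗ₜ[K] (a j ⊗ₜ[K] (cir (b i) (b j) - cir (b j) (b i)))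

/-- The multiplication `∗_r` induced by `r` on the dual space:
`(ξ ∗_r η)(y) = η(r₊ξ ∗ y + y ∗ r₊ξ) − ξ(y ∗ r₋η)`. -/
noncomputable def srOp (mul : P →ₗ[K] P →ₗ[K] P) (r : P ⊗[K] P)
    (ξ η : Module.Dual K P) : Module.Dual K P :=
  η ∘ₗ (mul (rPlus r ξ) + mul.flip (rPlus r ξ)) - ξ ∘ₗ mul.flip (rMinus r η)

/-- The multiplication `∘_r` induced by `r` on the dual space:
`(ξ ∘_r η)(y) = −η(r₊ξ ∘ y − y ∘ r₊ξ) + ξ(y ∘ r₋η)`. -/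
noncomputable def crOp (cir : P →ₗ[K] P →ₗ[K] P) (r : P ⊗[K] P)
    (ξ η : Module.Dual K P) : Module.Dual K P :=
  - (η ∘ₗ (cir (rPlus r ξ) - cir.flip (rPlus r ξ))) + ξ ∘ₗ cir.flip (rMinus r η)



namespace FactorizableAux

noncomputable def rPlusL (ξ : Module.Dual K P) : P ⊗[K] P →ₗ[K] P :=
  TensorProduct.lift ((LinearMap.lsmul K P).comp ξ)

noncomputable def rMinusL (η : Module.Dual K P) : P ⊗[K] P →ₗ[K] P :=
  TensorProduct.lift (((LinearMap.lsmul K P).comp η).flip)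

lemma rPlus_eq (r : P ⊗[K] P) (ξ : Module.Dual K P) : rPlus r ξ = rPlusL ξ r := rfl

lemma rMinus_eq (r : P ⊗[K] P) (η : Module.Dual K P) : rMinus r η = rMinusL η r := rfl

@[simp] lemma rPlus_tmul (x y : P) (ξ : Module.Dual K P) :
    rPlus (x ⊗ₜ[K] y) ξ = ξ x • y := by
  simp [rPlus]

@[simp] lemma rMinus_tmul (x y : P) (η : Module.Dual K P) :
    rMinus (x ⊗ₜ[K] y) η = η y • x := by
  simp [rMinus]

lemma rPlus_add (r : P ⊗[K] P) (ξ η : Module.Dual K P) :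
    rPlus r (ξ + η) = rPlus r ξ + rPlus r η := by
  induction r using TensorProduct.induction_on with
  | zero => simp [rPlus]
  | tmul x y => simp [add_smul]
  | add a b ha hb =>
      simp only [rPlus_eq, map_add] at ha hb ⊢
      rw [ha, hb]; abel

lemma rPlus_sub (r : P ⊗[K] P) (ξ η : Module.Dual K P) :
    rPlus r (ξ - η) = rPlus r ξ - rPlus r η := by
  induction r using TensorProduct.induction_on with
  | zero => simp [rPlus]
  | tmul x y => simp [sub_smul]
  | add a b ha hb =>
      simp only [rPlus_eq, map_add] at ha hb ⊢
      rw [ha, hb]; abel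

lemma rPlus_smul (r : P ⊗[K] P) (c : K) (ξ : Module.Dual K P) :
    rPlus r (c • ξ) = c • rPlus r ξ := by
  induction r using TensorProduct.induction_on with
  | zero => simp [rPlus]
  | tmul x y => simp [smul_smul]
  | add a b ha hb =>
      simp only [rPlus_eq, map_add] at ha hb ⊢
      rw [ha, hb, smul_add]

lemma rMinus_add (r : P ⊗[K] P) (ξ η : Module.Dual K P) :
    rMinus r (ξ + η) = rMinus r ξ + rMinus r η := by
  induction r using TensorProduct.induction_on with
  | zero => simp [rMinus]
  | tmul x y => simp [add_smul]
  | add a b ha hb =>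
      simp only [rMinus_eq, map_add] at ha hb ⊢
      rw [ha, hb]; abel

lemma rMinus_sub (r : P ⊗[K] P) (ξ η : Module.Dual K P) :
    rMinus r (ξ - η) = rMinus r ξ - rMinus r η := by
  induction r using TensorProduct.induction_on with
  | zero => simp [rMinus]
  | tmul x y => simp [sub_smul]
  | add a b ha hb =>
      simp only [rMinus_eq, map_add] at ha hb ⊢
      rw [ha, hb]; abel

lemma rMinus_smul (r : P ⊗[K] P) (c : K) (ξ : Module.Dual K P) :
    rMinus r (c • ξ) = c • rMinus r ξ := by
  induction r using TensorProduct.induction_on with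
  | zero => simp [rMinus]
  | tmul x y => simp [smul_smul]
  | add a b ha hb =>
      simp only [rMinus_eq, map_add] at ha hb ⊢
      rw [ha, hb, smul_add]

lemma rPlus_map_left (A : P →ₗ[K] P) (t : P ⊗[K] P) (ζ : Module.Dual K P) :
    rPlus (TensorProduct.map A LinearMap.id t) ζ = rPlus t (ζ ∘ₗ A) := by
  induction t using TensorProduct.induction_on with
  | zero => simp [rPlus]
  | tmul x y => simp
  | add a b ha hb =>
      simp only [rPlus_eq, map_add] at ha hb ⊢
      rw [ha, hb]

lemma rPlus_map_right (C : P →ₗ[K] P) (t : P ⊗[K] P) (ζ : Module.Dual K P) :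
    rPlus (TensorProduct.map LinearMap.id C t) ζ = C (rPlus t ζ) := by
  induction t using TensorProduct.induction_on with
  | zero => simp [rPlus]
  | tmul x y => simp
  | add a b ha hb =>
      simp only [rPlus_eq, map_add] at ha hb ⊢
      rw [ha, hb]

lemma rMinus_map_left (A : P →ₗ[K] P) (t : P ⊗[K] P) (ζ : Module.Dual K P) :
    rMinus (TensorProduct.map A LinearMap.id t) ζ = A (rMinus t ζ) := by
  induction t using TensorProduct.induction_on with
  | zero => simp [rMinus]
  | tmul x y => simp
  | add a b ha hb =>
      simp only [rMinus_eq, map_add] at ha hb ⊢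
      rw [ha, hb]

lemma rMinus_map_right (C : P →ₗ[K] P) (t : P ⊗[K] P) (ζ : Module.Dual K P) :
    rMinus (TensorProduct.map LinearMap.id C t) ζ = rMinus t (ζ ∘ₗ C) := by
  induction t using TensorProduct.induction_on with
  | zero => simp [rMinus]
  | tmul x y => simp
  | add a b ha hb =>
      simp only [rMinus_eq, map_add] at ha hb ⊢
      rw [ha, hb]

lemma rPlus_comm (t : P ⊗[K] P) (ξ : Module.Dual K P) :
    rPlus ((TensorProduct.comm K P P) t) ξ = rMinus t ξ := by
  induction t using TensorProduct.induction_on with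
  | zero => simp [rPlus, rMinus]
  | tmul x y => simp
  | add a b ha hb =>
      simp only [rPlus_eq, rMinus_eq, map_add] at ha hb ⊢
      rw [ha, hb]

lemma rMinus_comm (t : P ⊗[K] P) (ξ : Module.Dual K P) :
    rMinus ((TensorProduct.comm K P P) t) ξ = rPlus t ξ := by
  induction t using TensorProduct.induction_on with
  | zero => simp [rPlus, rMinus]
  | tmul x y => simp
  | add a b ha hb =>
      simp only [rPlus_eq, rMinus_eq, map_add] at ha hb ⊢
      rw [ha, hb]

lemma final_step (bil : P →ₗ[K] P →ₗ[K] P) {lam : K} (hlam : lam ≠ 0)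
    (a a' b b' : P) :
    lam⁻¹ • (bil a (b - b') + bil (a - a') b')
      = bil a' (lam⁻¹ • (b - b')) + bil (lam⁻¹ • (a - a')) b'
        + lam • bil (lam⁻¹ • (a - a')) (lam⁻¹ • (b - b')) := by
  have h : a' + (a - a') = a := by abel
  have key : bil a (b - b') = bil a' (b - b') + bil (a - a') (b - b') := by
    rw [← LinearMap.add_apply, ← map_add, h]
  simp only [map_smul, LinearMap.smul_apply, key]
  rw [smul_smul lam, smul_smul, mul_inv_cancel₀ hlam, one_mul]
  rw [smul_add, smul_add]
  abel

end FactorizableAux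

open FactorizableAux in

/-- For a factorizable structure `r` with induced Rota–Baxter
operator `B = λ·r₋∘I⁻¹`, the map `φ = (1/λ)·I` is an isomorphism of
pre-Poisson algebras from `(P*, ∗_r, ∘_r)` to the descendent pre-Poisson
algebra `(P, ∗_B, ∘_B)`. -/
theorem factorizable_iso_descendent
    [FiniteDimensional K P]
    (mul cir : P →ₗ[K] P →ₗ[K] P)
    (hZin : ∀ x y z : P, mul x (mul y z) = mul (mul x y + mul y x) z)
    (hPre : ∀ x y z : P,
      cir (cir x y) z - cir x (cir y z) = cir (cir y x) z - cir y (cir x z))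
    (hC1 : ∀ x y z : P,
      mul (cir x y - cir y x) z = cir x (mul y z) - mul y (cir x z))
    (hC2 : ∀ x y z : P,
      cir (mul x y + mul y x) z = mul x (cir y z) + mul y (cir x z))
    (lam : K) (hlam : lam ≠ 0)
    (r : P ⊗[K] P)
    (hYB : ∀ (n : ℕ) (a b : Fin n → P), r = ∑ i, a i ⊗ₜ[K] b i →
      Zsum mul a b = 0 ∧ Ssum cir a b = 0)
    (hinv : LRinv mul cir (r - TensorProduct.comm K P P r))
    -- `J` is the inverse of the bijection `I = r₊ − r₋`
    (J : P → Module.Dual K P)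
    (hJ1 : ∀ x : P, rPlus r (J x) - rMinus r (J x) = x)
    (hJ2 : ∀ ξ : Module.Dual K P, J (rPlus r ξ - rMinus r ξ) = ξ) :
    ∀ B : P → P, (∀ x : P, B x = lam • rMinus r (J x)) →
    ∀ φ : Module.Dual K P → P,
      (∀ ξ : Module.Dual K P, φ ξ = lam⁻¹ • (rPlus r ξ - rMinus r ξ)) →
      Function.Bijective φ ∧
      (∀ ξ η : Module.Dual K P,
        φ (srOp mul r ξ η)
          = mul (B (φ ξ)) (φ η) + mul (φ ξ) (B (φ η)) + lam • mul (φ ξ) (φ η)) ∧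
      (∀ ξ η : Module.Dual K P,
        φ (crOp cir r ξ η)
          = cir (B (φ ξ)) (φ η) + cir (φ ξ) (B (φ η)) + lam • cir (φ ξ) (φ η)) := by
  intro B hB φ hφ
  obtain ⟨hinvS, hinvC⟩ := hinv
  -- `s = r - τ(r)`; its contractions give `I = r₊ - r₋` (and `-I`).
  have hps : ∀ ζ : Module.Dual K P,
      rPlus (r - TensorProduct.comm K P P r) ζ = rPlus r ζ - rMinus r ζ := by
    intro ζ
    rw [rPlus_eq, map_sub, ← rPlus_eq, ← rPlus_eq, rPlus_comm]
  have hms : ∀ ζ : Module.Dual K P,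
      rMinus (r - TensorProduct.comm K P P r) ζ = -(rPlus r ζ - rMinus r ζ) := by
    intro ζ
    rw [rMinus_eq, map_sub, ← rMinus_eq, ← rMinus_eq, rMinus_comm]
    abel
  -- Invariance identities for `I`.
  have E1 : ∀ (x : P) (ζ : Module.Dual K P),
      rPlus r (ζ ∘ₗ mul x) - rMinus r (ζ ∘ₗ mul x)
        = mul x (rPlus r ζ - rMinus r ζ) + mul.flip x (rPlus r ζ - rMinus r ζ) := by
    intro x ζ
    have h0 := hinvS x
    rw [LinearMap.sub_apply, sub_eq_zero] at h0
    have := calc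
      rPlus (r - TensorProduct.comm K P P r) (ζ ∘ₗ mul x)
          = rPlus (TensorProduct.map (mul x) LinearMap.id
              (r - TensorProduct.comm K P P r)) ζ := (rPlus_map_left _ _ _).symm
      _ = rPlus (TensorProduct.map LinearMap.id (mul x + mul.flip x)
              (r - TensorProduct.comm K P P r)) ζ := by rw [h0]
      _ = (mul x + mul.flip x) (rPlus (r - TensorProduct.comm K P P r) ζ) :=
            rPlus_map_right _ _ _
    rw [hps, hps] at this
    rw [this, LinearMap.add_apply]
  have E2 : ∀ (x : P) (ζ : Module.Dual K P),
      rPlus r (ζ ∘ₗ (mul x + mul.flip x)) - rMinus r (ζ ∘ₗ (mul x + mul.flip x))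
        = mul x (rPlus r ζ - rMinus r ζ) := by
    intro x ζ
    have h0 := hinvS x
    rw [LinearMap.sub_apply, sub_eq_zero] at h0
    have := calc
      rMinus (r - TensorProduct.comm K P P r) (ζ ∘ₗ (mul x + mul.flip x))
          = rMinus (TensorProduct.map LinearMap.id (mul x + mul.flip x)
              (r - TensorProduct.comm K P P r)) ζ := (rMinus_map_right _ _ _).symm
      _ = rMinus (TensorProduct.map (mul x) LinearMap.id
              (r - TensorProduct.comm K P P r)) ζ := by rw [h0]
      _ = mul x (rMinus (r - TensorProduct.comm K P P r) ζ) := rMinus_map_left _ _ _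
    rw [hms, hms, map_neg, neg_inj] at this
    exact this
  have E3 : ∀ (x : P) (ζ : Module.Dual K P),
      rPlus r (ζ ∘ₗ mul.flip x) - rMinus r (ζ ∘ₗ mul.flip x)
        = - mul (rPlus r ζ - rMinus r ζ) x := by
    intro x ζ
    have hsplit : ζ ∘ₗ (mul x + mul.flip x) = ζ ∘ₗ mul x + ζ ∘ₗ mul.flip x := by
      ext y; simp
    have h2 := E2 x ζ
    rw [hsplit, rPlus_add, rMinus_add] at h2
    have h1 := E1 x ζ
    have : rPlus r (ζ ∘ₗ mul.flip x) - rMinus r (ζ ∘ₗ mul.flip x)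
        = mul x (rPlus r ζ - rMinus r ζ)
          - (rPlus r (ζ ∘ₗ mul x) - rMinus r (ζ ∘ₗ mul x)) := by
      rw [← h2]; abel
    rw [this, h1, LinearMap.flip_apply]
    abel
  have F3 : ∀ (x : P) (ζ : Module.Dual K P),
      rPlus r (ζ ∘ₗ cir x) - rMinus r (ζ ∘ₗ cir x)
        = -(cir x (rPlus r ζ - rMinus r ζ) - cir.flip x (rPlus r ζ - rMinus r ζ)) := by
    intro x ζ
    have h0 := hinvC x
    rw [LinearMap.add_apply, add_eq_zero_iff_eq_neg] at h0
    have := calc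
      rPlus (r - TensorProduct.comm K P P r) (ζ ∘ₗ cir x)
          = rPlus (TensorProduct.map (cir x) LinearMap.id
              (r - TensorProduct.comm K P P r)) ζ := (rPlus_map_left _ _ _).symm
      _ = rPlus (-(TensorProduct.map LinearMap.id (cir x - cir.flip x)
              (r - TensorProduct.comm K P P r))) ζ := by rw [h0]
      _ = -(rPlus (TensorProduct.map LinearMap.id (cir x - cir.flip x)
              (r - TensorProduct.comm K P P r)) ζ) := by
            rw [rPlus_eq, map_neg, rPlus_eq]
      _ = -((cir x - cir.flip x) (rPlus (r - TensorProduct.comm K P P r) ζ)) := by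
            rw [rPlus_map_right]
    rw [hps, hps] at this
    rw [this, LinearMap.sub_apply]
  have F4 : ∀ (x : P) (ζ : Module.Dual K P),
      rPlus r (ζ ∘ₗ (cir x - cir.flip x)) - rMinus r (ζ ∘ₗ (cir x - cir.flip x))
        = - cir x (rPlus r ζ - rMinus r ζ) := by
    intro x ζ
    have h0 := hinvC x
    rw [LinearMap.add_apply, add_eq_zero_iff_eq_neg] at h0
    have h0' : TensorProduct.map LinearMap.id (cir x - cir.flip x)
          (r - TensorProduct.comm K P P r)
        = -(TensorProduct.map (cir x) LinearMap.id
            (r - TensorProduct.comm K P P r)) := by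
      rw [h0, neg_neg]
    have := calc
      rMinus (r - TensorProduct.comm K P P r) (ζ ∘ₗ (cir x - cir.flip x))
          = rMinus (TensorProduct.map LinearMap.id (cir x - cir.flip x)
              (r - TensorProduct.comm K P P r)) ζ := (rMinus_map_right _ _ _).symm
      _ = rMinus (-(TensorProduct.map (cir x) LinearMap.id
              (r - TensorProduct.comm K P P r))) ζ := by rw [h0']
      _ = -(rMinus (TensorProduct.map (cir x) LinearMap.id
              (r - TensorProduct.comm K P P r)) ζ) := by
            rw [rMinus_eq, map_neg, rMinus_eq]
      _ = -(cir x (rMinus (r - TensorProduct.comm K P P r) ζ)) := by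
            rw [rMinus_map_left]
    rw [hms, hms, map_neg, neg_neg] at this
    exact neg_eq_iff_eq_neg.mp this
  have F5 : ∀ (x : P) (ζ : Module.Dual K P),
      rPlus r (ζ ∘ₗ cir.flip x) - rMinus r (ζ ∘ₗ cir.flip x)
        = cir (rPlus r ζ - rMinus r ζ) x := by
    intro x ζ
    have hsplit : ζ ∘ₗ (cir x - cir.flip x) = ζ ∘ₗ cir x - ζ ∘ₗ cir.flip x := by
      ext y; simp
    have h4 := F4 x ζ
    rw [hsplit, rPlus_sub, rMinus_sub] at h4
    have h3 := F3 x ζ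
    have : rPlus r (ζ ∘ₗ cir.flip x) - rMinus r (ζ ∘ₗ cir.flip x)
        = (rPlus r (ζ ∘ₗ cir x) - rMinus r (ζ ∘ₗ cir x))
          - (- cir x (rPlus r ζ - rMinus r ζ)) := by
      rw [← h4]; abel
    rw [this, h3, LinearMap.flip_apply]
    abel
  -- `B ∘ φ = r₋` and `φ` is explicit.
  have hJφ : ∀ ξ : Module.Dual K P, J (φ ξ) = lam⁻¹ • ξ := by
    intro ξ
    have : φ ξ = rPlus r (lam⁻¹ • ξ) - rMinus r (lam⁻¹ • ξ) := by
      rw [hφ, rPlus_smul, rMinus_smul, smul_sub]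
    rw [this, hJ2]
  have hBφ : ∀ ξ : Module.Dual K P, B (φ ξ) = rMinus r ξ := by
    intro ξ
    rw [hB, hJφ, rMinus_smul, smul_smul, mul_inv_cancel₀ hlam, one_smul]
  refine ⟨⟨?_, ?_⟩, ?_, ?_⟩
  · -- injectivity
    intro ξ η h
    have h2 : rPlus r ξ - rMinus r ξ = rPlus r η - rMinus r η := by
      have h' : lam⁻¹ • (rPlus r ξ - rMinus r ξ) = lam⁻¹ • (rPlus r η - rMinus r η) := by
        rw [← hφ, ← hφ, h]
      exact smul_right_injective P (inv_ne_zero hlam) h'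
    calc ξ = J (rPlus r ξ - rMinus r ξ) := (hJ2 ξ).symm
      _ = J (rPlus r η - rMinus r η) := by rw [h2]
      _ = η := hJ2 η
  · -- surjectivity
    intro x
    refine ⟨J (lam • x), ?_⟩
    rw [hφ, hJ1, smul_smul, inv_mul_cancel₀ hlam, one_smul]
  · -- `∗` homomorphism
    intro ξ η
    have hkey : rPlus r (srOp mul r ξ η) - rMinus r (srOp mul r ξ η)
        = mul (rPlus r ξ) (rPlus r η - rMinus r η)
          + mul (rPlus r ξ - rMinus r ξ) (rMinus r η) := by
      have hdef : srOp mul r ξ η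
          = η ∘ₗ (mul (rPlus r ξ) + mul.flip (rPlus r ξ))
            - ξ ∘ₗ mul.flip (rMinus r η) := rfl
      rw [hdef, rPlus_sub, rMinus_sub]
      have hX := E2 (rPlus r ξ) η
      have hY := E3 (rMinus r η) ξ
      have hregroup : rPlus r (η ∘ₗ (mul (rPlus r ξ) + mul.flip (rPlus r ξ)))
            - rPlus r (ξ ∘ₗ mul.flip (rMinus r η))
            - (rMinus r (η ∘ₗ (mul (rPlus r ξ) + mul.flip (rPlus r ξ)))
              - rMinus r (ξ ∘ₗ mul.flip (rMinus r η)))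
          = (rPlus r (η ∘ₗ (mul (rPlus r ξ) + mul.flip (rPlus r ξ)))
            - rMinus r (η ∘ₗ (mul (rPlus r ξ) + mul.flip (rPlus r ξ))))
            - (rPlus r (ξ ∘ₗ mul.flip (rMinus r η))
              - rMinus r (ξ ∘ₗ mul.flip (rMinus r η))) := by abel
      rw [hregroup, hX, hY]
      simp only [LinearMap.neg_apply, sub_neg_eq_add]
      try abel
    rw [hφ, hkey, hBφ, hBφ, hφ, hφ]
    exact final_step mul hlam (rPlus r ξ) (rMinus r ξ) (rPlus r η) (rMinus r η)
  · -- `∘` homomorphism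
    intro ξ η
    have hkey : rPlus r (crOp cir r ξ η) - rMinus r (crOp cir r ξ η)
        = cir (rPlus r ξ) (rPlus r η - rMinus r η)
          + cir (rPlus r ξ - rMinus r ξ) (rMinus r η) := by
      have hdef : crOp cir r ξ η
          = ξ ∘ₗ cir.flip (rMinus r η)
            - η ∘ₗ (cir (rPlus r ξ) - cir.flip (rPlus r ξ)) := by
        show -(η ∘ₗ (cir (rPlus r ξ) - cir.flip (rPlus r ξ)))
            + ξ ∘ₗ cir.flip (rMinus r η) = _
        abel
      rw [hdef, rPlus_sub, rMinus_sub]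
      have h5 := F5 (rMinus r η) ξ
      have h4 := F4 (rPlus r ξ) η
      have hregroup : rPlus r (ξ ∘ₗ cir.flip (rMinus r η))
            - rPlus r (η ∘ₗ (cir (rPlus r ξ) - cir.flip (rPlus r ξ)))
            - (rMinus r (ξ ∘ₗ cir.flip (rMinus r η))
              - rMinus r (η ∘ₗ (cir (rPlus r ξ) - cir.flip (rPlus r ξ))))
          = (rPlus r (ξ ∘ₗ cir.flip (rMinus r η))
            - rMinus r (ξ ∘ₗ cir.flip (rMinus r η)))
            - (rPlus r (η ∘ₗ (cir (rPlus r ξ) - cir.flip (rPlus r ξ)))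
              - rMinus r (η ∘ₗ (cir (rPlus r ξ) - cir.flip (rPlus r ξ)))) := by abel
      rw [hregroup, h5, h4]
      simp only [LinearMap.neg_apply, sub_neg_eq_add]
      try abel
    rw [hφ, hkey, hBφ, hBφ, hφ, hφ]
    exact final_step cir hlam (rPlus r ξ) (rMinus r ξ) (rPlus r η) (rMinus r η)


end
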